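/- The sequences (A^(k), B^(k), Q^(k)) for the minus-sign equation are well defined (in particular Q^(1) − B^(k) is positive definite for every k), and for every Hermitian positive definite solution X_K of X − A^H f(X)^{-1} A = Q and every k ≥ 1: B^(k) ≤ B^(k+1) ≤ 0 < Q ≤ X_K ≤ Q^(k+1) ≤ Q^(k) in the Loewner order. -/

import Mathlib

open Matrix Filter Topology
open scoped ComplexOrder

noncomputable section

/-- Square complex matrices of size `n`. -/
abbrev Mat (n : ℕ) := Matrix (Fin n) (Fin n) ℂ

/-- An operator `f` on complex `n × n` matrices is *admissible* if it satisfies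
(a1) `f (f X) = X`, (a2) additivity, (a3) multiplicativity, and
(a4) `f X` is positive semidefinite whenever `X` is. -/
def Admissible {n : ℕ} (f : Mat n → Mat n) : Prop :=
  (∀ X, f (f X) = X) ∧
  (∀ X Y, f (X + Y) = f X + f Y) ∧
  (∀ X Y, f (X * Y) = f X * f Y) ∧
  (∀ X, X.PosSemidef → (f X).PosSemidef)

/-- The general recursion of the paper: with constant matrices `(Ac, Bc, Qc)` and
initial triple `init = (A⁽¹⁾, B⁽¹⁾, Q⁽¹⁾)`, step
`(A, B, Q) ↦ (Ac (Qc - B)⁻¹ A, Bc + Ac (Qc - B)⁻¹ Acᴴ, Q - Aᴴ (Qc - B)⁻¹ A)`.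
Index `k : ℕ` corresponds to the paper's index `k + 1`. -/
def nmeIter {n : ℕ} (Ac Bc Qc : Mat n) (init : Mat n × Mat n × Mat n) :
    ℕ → Mat n × Mat n × Mat n
  | 0 => init
  | k + 1 =>
    let p := nmeIter Ac Bc Qc init k
    (Ac * (Qc - p.2.1)⁻¹ * p.1,
     Bc + Ac * (Qc - p.2.1)⁻¹ * Acᴴ,
     p.2.2 - p.1ᴴ * (Qc - p.2.1)⁻¹ * p.1)

/-- The sequence `(A⁽ᵏ⁾, B⁽ᵏ⁾, Q⁽ᵏ⁾)` (indexed from `0`) for the minus-sign equation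
`X - Aᴴ f(X)⁻¹ A = Q`. -/
def minusSeq {n : ℕ} (f : Mat n → Mat n) (A Q : Mat n) : ℕ → Mat n × Mat n × Mat n :=
  nmeIter (f A * (f Q)⁻¹ * A) (-(f A * (f Q)⁻¹ * (f A)ᴴ)) (Q + Aᴴ * (f Q)⁻¹ * A)
    (f A * (f Q)⁻¹ * A, -(f A * (f Q)⁻¹ * (f A)ᴴ), Q + Aᴴ * (f Q)⁻¹ * A)

/-- `mAs f A Q k` is the paper's `A^{(k+1)}` (minus-sign equation). -/
def mAs {n : ℕ} (f : Mat n → Mat n) (A Q : Mat n) (k : ℕ) : Mat n := (minusSeq f A Q k).1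
/-- `mBs f A Q k` is the paper's `B^{(k+1)}` (minus-sign equation). -/
def mBs {n : ℕ} (f : Mat n → Mat n) (A Q : Mat n) (k : ℕ) : Mat n := (minusSeq f A Q k).2.1
/-- `mQs f A Q k` is the paper's `Q^{(k+1)}` (minus-sign equation). -/
def mQs {n : ℕ} (f : Mat n → Mat n) (A Q : Mat n) (k : ℕ) : Mat n := (minusSeq f A Q k).2.2

namespace NMEAux

variable {n : ℕ} {f : Mat n → Mat n}

lemma pd_mul_inv {M : Mat n} (h : M.PosDef) : M * M⁻¹ = 1 :=
  Matrix.mul_nonsing_inv _ ((Matrix.isUnit_iff_isUnit_det _).mp h.isUnit)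

lemma pd_inv_mul {M : Mat n} (h : M.PosDef) : M⁻¹ * M = 1 :=
  Matrix.nonsing_inv_mul _ ((Matrix.isUnit_iff_isUnit_det _).mp h.isUnit)

lemma posDef_of_posSemidef_isUnit {M : Mat n} (h : M.PosSemidef) (hu : IsUnit M) : M.PosDef := by
  exact h.posDef_iff_isUnit.mpr hu

lemma posDef_of_sub_psd {X Y : Mat n} (hY : Y.PosDef) (hXY : (X - Y).PosSemidef) : X.PosDef := by
  have h : X = Y + (X - Y) := by abel
  rw [h]
  exact hY.add_posSemidef hXY

/-- inverse is antitone on the positive definite cone -/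
lemma inv_antitone {X Y : Mat n} (hY : Y.PosDef) (hXY : (X - Y).PosSemidef) :
    (Y⁻¹ - X⁻¹).PosSemidef := by
  have hX : X.PosDef := posDef_of_sub_psd hY hXY
  set D := X - Y with hD
  have hDh : D.IsHermitian := hXY.1
  have hXi : (X⁻¹).IsHermitian := hX.inv.1
  have hYi : (Y⁻¹).IsHermitian := hY.inv.1
  have h1 : X⁻¹ * D * Y⁻¹ = Y⁻¹ - X⁻¹ := by
    rw [hD, Matrix.mul_sub, Matrix.sub_mul, pd_inv_mul hX]
    rw [Matrix.mul_assoc, pd_mul_inv hY, Matrix.one_mul, Matrix.mul_one]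
  have h2 : Y⁻¹ * D * X⁻¹ = Y⁻¹ - X⁻¹ := by
    rw [hD, Matrix.mul_sub, Matrix.sub_mul, Matrix.mul_assoc, pd_mul_inv hX, Matrix.mul_one]
    rw [pd_inv_mul hY, Matrix.one_mul]
  have h3 : X⁻¹ * D * Y⁻¹ * D * X⁻¹ = (Y⁻¹ - X⁻¹) - X⁻¹ * D * X⁻¹ := by
    rw [h1, Matrix.sub_mul, Matrix.sub_mul, h2]
  have key : Y⁻¹ - X⁻¹ = X⁻¹ * D * X⁻¹ + X⁻¹ * D * Y⁻¹ * D * X⁻¹ := by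
    rw [h3]; abel
  rw [key]
  have p1 : (X⁻¹ * D * X⁻¹).PosSemidef := by
    have hp := hXY.conjTranspose_mul_mul_same (B := X⁻¹)
    rwa [hXi.eq] at hp
  have p2 : (X⁻¹ * D * Y⁻¹ * D * X⁻¹).PosSemidef := by
    have hp := (hY.inv.posSemidef).conjTranspose_mul_mul_same (B := D * X⁻¹)
    have e : (D * X⁻¹)ᴴ = X⁻¹ * D := by
      rw [Matrix.conjTranspose_mul, hXi.eq, hDh.eq]
    rw [e, ← Matrix.mul_assoc] at hp
    exact hp
  exact p1.add p2

lemma smw_ring {R : Type*} [Ring R] (D d W w C Ch X v : R)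
    (hD : D * d = 1) (hW : w * W = 1) (hX : X * v = 1) (hkey : C * d * Ch = W - X) :
    (D - Ch * w * C) * (d + d * Ch * v * C * d) = 1 := by
  have e1 : D * (d * Ch * v * C * d) = Ch * v * C * d := by
    have h : D * (d * Ch * v * C * d) = (D * d) * (Ch * v * C * d) := by noncomm_ring
    rw [h, hD, one_mul]
  have e2 : Ch * w * C * (d * Ch * v * C * d) = Ch * v * C * d - Ch * w * C * d := by
    have h : Ch * w * C * (d * Ch * v * C * d) = Ch * w * (C * d * Ch) * (v * (C * d)) := by
      noncomm_ring
    rw [h, hkey]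
    have h2 : Ch * w * (W - X) * (v * (C * d))
        = Ch * ((w * W) * (v * (C * d))) - Ch * (w * ((X * v) * (C * d))) := by noncomm_ring
    rw [h2, hW, hX]
    noncomm_ring
  calc (D - Ch * w * C) * (d + d * Ch * v * C * d)
      = D * d + D * (d * Ch * v * C * d) - Ch * w * C * d
        - Ch * w * C * (d * Ch * v * C * d) := by noncomm_ring
    _ = 1 + (Ch * v * C * d) - Ch * w * C * d - (Ch * v * C * d - Ch * w * C * d) := by
        rw [hD, e1, e2]
    _ = 1 := by noncomm_ring

/-- Sherman–Morrison–Woodbury: `(D - Cᴴ W⁻¹ C)⁻¹ = D⁻¹ + D⁻¹ Cᴴ (W - C D⁻¹ Cᴴ)⁻¹ C D⁻¹`. -/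
lemma smw {D W C : Mat n} (hD : D * D⁻¹ = 1) (hW : W⁻¹ * W = 1)
    (hX : (W - C * D⁻¹ * Cᴴ) * (W - C * D⁻¹ * Cᴴ)⁻¹ = 1) :
    (D - Cᴴ * W⁻¹ * C)⁻¹ = D⁻¹ + D⁻¹ * Cᴴ * (W - C * D⁻¹ * Cᴴ)⁻¹ * C * D⁻¹ := by
  apply Matrix.inv_eq_right_inv
  have h := smw_ring D D⁻¹ W W⁻¹ C Cᴴ (W - C * D⁻¹ * Cᴴ) (W - C * D⁻¹ * Cᴴ)⁻¹ hD hW hX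
    (by abel)
  convert h using 2 <;> noncomm_ring

/-- abstract core of the `W`-identity -/
lemma wid_ring {R : Type*} [Ring R] (W w Q q A Ah T t : R)
    (hW : W * w = 1) (hw : w * W = 1) (hq : q * Q = 1) (ht : T * t = 1)
    (hT : Ah * w * A = T - Q) :
    (W + A * q * Ah) * (w * (W - A * t * Ah)) = W := by
  have e : (W + A * q * Ah) * (w * (W - A * t * Ah))
      = (W * w) * W - (W * w) * (A * t * Ah) + A * q * ((Ah * (w * W)) * 1)
        - A * q * ((Ah * w * A) * (t * Ah)) := by noncomm_ring
  rw [e, hW, hw, hT]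
  have e2 : A * q * ((T - Q) * (t * Ah)) = A * q * ((T * t) * Ah) - A * ((q * Q) * (t * Ah)) := by
    noncomm_ring
  rw [e2, ht, hq]
  noncomm_ring

/-- `W - A (Q + Aᴴ W⁻¹ A)⁻¹ Aᴴ = W (W + A Q⁻¹ Aᴴ)⁻¹ W`, for `W, Q` positive definite. -/
lemma w_identity {W Q A : Mat n} (hW : W.PosDef) (hQ : Q.PosDef) :
    W - A * (Q + Aᴴ * W⁻¹ * A)⁻¹ * Aᴴ = W * (W + A * Q⁻¹ * Aᴴ)⁻¹ * W := by
  have hT : (Q + Aᴴ * W⁻¹ * A).PosDef :=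
    hQ.add_posSemidef ((hW.inv.posSemidef).conjTranspose_mul_mul_same (B := A))
  have hS : (W + A * Q⁻¹ * Aᴴ).PosDef :=
    hW.add_posSemidef ((hQ.inv.posSemidef).mul_mul_conjTranspose_same (B := A))
  set T := Q + Aᴴ * W⁻¹ * A with hTdef
  set S := W + A * Q⁻¹ * Aᴴ with hSdef
  have hmain : S * (W⁻¹ * (W - A * T⁻¹ * Aᴴ)) = W := by
    rw [hSdef]
    exact wid_ring W W⁻¹ Q Q⁻¹ A Aᴴ T T⁻¹ (pd_mul_inv hW) (pd_inv_mul hW)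
      (pd_inv_mul hQ) (pd_mul_inv hT) (by rw [hTdef]; abel)
  have h2 : W⁻¹ * (W - A * T⁻¹ * Aᴴ) = S⁻¹ * W := by
    have h := congrArg (fun M => S⁻¹ * M) hmain
    simpa only [← Matrix.mul_assoc, pd_inv_mul hS, Matrix.one_mul] using h
  have h3 := congrArg (fun M => W * M) h2
  simpa only [← Matrix.mul_assoc, pd_mul_inv hW, Matrix.one_mul] using h3

/-- positivity of `W - A (Q + Aᴴ W⁻¹ A)⁻¹ Aᴴ`. -/
lemma w_identity_psd {W Q A : Mat n} (hW : W.PosDef) (hQ : Q.PosDef) :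
    (W - A * (Q + Aᴴ * W⁻¹ * A)⁻¹ * Aᴴ).PosSemidef := by
  rw [w_identity hW hQ]
  have hS : (W + A * Q⁻¹ * Aᴴ).PosDef :=
    hW.add_posSemidef ((hQ.inv.posSemidef).mul_mul_conjTranspose_same (B := A))
  have hp := (hS.inv.posSemidef).mul_mul_conjTranspose_same (B := W)
  rwa [hW.1.eq] at hp




lemma f_add (hf : Admissible f) (X Y : Mat n) : f (X + Y) = f X + f Y := hf.2.1 X Y
lemma f_mul (hf : Admissible f) (X Y : Mat n) : f (X * Y) = f X * f Y := hf.2.2.1 X Y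
lemma f_invol (hf : Admissible f) (X : Mat n) : f (f X) = X := hf.1 X
lemma f_psd (hf : Admissible f) {X : Mat n} (h : X.PosSemidef) : (f X).PosSemidef :=
  hf.2.2.2 X h

lemma f_zero (hf : Admissible f) : f 0 = 0 := by
  have h := hf.2.1 0 0
  simpa using h.symm

lemma f_neg (hf : Admissible f) (X : Mat n) : f (-X) = -f X := by
  have h := hf.2.1 X (-X)
  simp only [add_neg_cancel, f_zero hf] at h
  exact (neg_eq_of_add_eq_zero_right h.symm).symm

lemma f_sub (hf : Admissible f) (X Y : Mat n) : f (X - Y) = f X - f Y := by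
  rw [sub_eq_add_neg, sub_eq_add_neg, f_add hf, f_neg hf]

lemma f_one (hf : Admissible f) : f 1 = 1 := by
  have h : (1 : Mat n) = f (f 1 * 1) := by rw [mul_one, f_invol hf]
  rw [f_mul hf, f_invol hf, one_mul] at h
  exact h.symm

lemma f_inj (hf : Admissible f) {X Y : Mat n} (h : f X = f Y) : X = Y := by
  have h2 := congrArg f h
  rwa [f_invol hf, f_invol hf] at h2

/-- a Hermitian matrix is a difference of two PSD matrices -/
lemma herm_decomp {X : Mat n} (hX : X.IsHermitian) :
    ∃ P N : Mat n, P.PosSemidef ∧ N.PosSemidef ∧ X = P - N := by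
  classical
  set U : Mat n := (Matrix.IsHermitian.eigenvectorUnitary hX : Mat n) with hU
  set ev := hX.eigenvalues with hev
  refine ⟨U * Matrix.diagonal (fun i => ((max (ev i) 0 : ℝ) : ℂ)) * Uᴴ,
    U * Matrix.diagonal (fun i => ((max (-ev i) 0 : ℝ) : ℂ)) * Uᴴ, ?_, ?_, ?_⟩
  · exact (Matrix.posSemidef_diagonal_iff.mpr fun i =>
      Complex.zero_le_real.mpr (le_max_right _ _)).mul_mul_conjTranspose_same U
  · exact (Matrix.posSemidef_diagonal_iff.mpr fun i =>
      Complex.zero_le_real.mpr (le_max_right _ _)).mul_mul_conjTranspose_same U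
  · have hspec := hX.spectral_theorem
    rw [Unitary.conjStarAlgAut_apply, Matrix.star_eq_conjTranspose] at hspec
    rw [← Matrix.sub_mul, ← Matrix.mul_sub, Matrix.diagonal_sub]
    have hd : (fun i => ((max (ev i) 0 : ℝ) : ℂ) - ((max (-ev i) 0 : ℝ) : ℂ))
        = (RCLike.ofReal ∘ ev) := by
      funext i
      rw [← Complex.ofReal_sub, max_zero_sub_max_neg_zero_eq_self]
      rfl
    rw [hd]
    exact hspec

lemma f_herm (hf : Admissible f) {X : Mat n} (hX : X.IsHermitian) : (f X).IsHermitian := by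
  obtain ⟨P, N, hP, hN, rfl⟩ := herm_decomp hX
  rw [f_sub hf]
  exact ((f_psd hf hP).isHermitian).sub ((f_psd hf hN).isHermitian)

/-- the main structural lemma: `f` commutes with conjugate transpose. -/
lemma f_conjTranspose (hf : Admissible f) (X : Mat n) : f (Xᴴ) = (f X)ᴴ := by
  rcases Nat.eq_zero_or_pos n with h0 | hpos
  · subst h0
    haveI : IsEmpty (Fin 0) := Fin.isEmpty
    apply Subsingleton.elim
  set u := f (Complex.I • 1) with hu
  have hcomm : ∀ M : Mat n, u * M = M * u := by
    intro M
    have hM : M = f (f M) := (f_invol hf M).symm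
    rw [hM, hu, ← f_mul hf, ← f_mul hf]
    congr 1
    rw [Matrix.smul_mul, Matrix.mul_smul, Matrix.one_mul, Matrix.mul_one]
  have hu2 : u * u = -1 := by
    rw [hu, ← f_mul hf]
    have h : (Complex.I • (1 : Mat n)) * (Complex.I • 1) = -1 := by
      rw [Matrix.smul_mul, Matrix.mul_smul, Matrix.one_mul, smul_smul, Complex.I_mul_I,
        neg_one_smul]
    rw [h, f_neg hf, f_one hf]
  obtain ⟨c, hc⟩ := Matrix.mem_range_scalar_of_commute_single
    (M := u) (fun ⦃_ _⦄ _ => (hcomm _).symm)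
  have hcu : u = c • (1 : Mat n) := by
    rw [← hc, Matrix.scalar_apply]
    ext i j
    by_cases hij : i = j <;> simp [Matrix.diagonal_apply, Matrix.one_apply, hij]
  have hc2 : c * c = -1 := by
    have hmul : (c • (1 : Mat n)) * (c • 1) = (c * c) • 1 := by
      rw [Matrix.smul_mul, Matrix.mul_smul, smul_smul, Matrix.one_mul]
    have h : (c * c) • (1 : Mat n) = -1 := by rw [← hmul, ← hcu, hu2]
    have h2 := congrFun (congrFun h ⟨0, hpos⟩) ⟨0, hpos⟩
    simpa [Matrix.one_apply] using h2
  have hstar_c : star c = -c := by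
    have hfac : (c - Complex.I) * (c + Complex.I) = 0 := by
      linear_combination hc2 - Complex.I_mul_I
    rcases mul_eq_zero.mp hfac with h | h
    · rw [sub_eq_zero.mp h]
      simp [Complex.star_def, Complex.conj_I]
    · rw [eq_neg_of_add_eq_zero_left h]
      simp [Complex.star_def, Complex.conj_I]
  have hustar : uᴴ = -u := by
    rw [hcu, Matrix.conjTranspose_smul, Matrix.conjTranspose_one, hstar_c, neg_smul]
  have hXsum : (X + Xᴴ).IsHermitian := by
    show (X + Xᴴ)ᴴ = X + Xᴴ
    rw [Matrix.conjTranspose_add, Matrix.conjTranspose_conjTranspose, add_comm]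
  set K := Complex.I • (Xᴴ - X) with hK
  have hKh : K.IsHermitian := by
    show Kᴴ = K
    rw [hK, Matrix.conjTranspose_smul, Matrix.conjTranspose_sub,
      Matrix.conjTranspose_conjTranspose]
    simp only [RCLike.star_def, Complex.conj_I, neg_smul, ← smul_neg, neg_sub]
  have hXd : Xᴴ - X = (-(Complex.I • 1)) * K := by
    rw [hK, Matrix.neg_mul, Matrix.smul_mul, Matrix.one_mul, smul_smul, Complex.I_mul_I,
      neg_one_smul, neg_neg]
  have e1 : f Xᴴ + f X = f (X + Xᴴ) := by rw [f_add hf, add_comm]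
  have e2 : f Xᴴ - f X = (-u) * f K := by
    have hfs := f_sub hf Xᴴ X
    rw [← hfs, hXd, f_mul hf, f_neg hf, Matrix.neg_mul]
  have hPh : (f (X + Xᴴ)).IsHermitian := f_herm hf hXsum
  have hKfh : (f K).IsHermitian := f_herm hf hKh
  have main : f Xᴴ + f Xᴴ = (f X)ᴴ + (f X)ᴴ := by
    have t1 : f Xᴴ + f Xᴴ = f (X + Xᴴ) + (-u) * f K := by rw [← e1, ← e2]; abel
    have t2 : f X + f X = f (X + Xᴴ) - (-u) * f K := by rw [← e1, ← e2]; abel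
    have t3 := congrArg Matrix.conjTranspose t2
    rw [Matrix.conjTranspose_add, Matrix.conjTranspose_sub, hPh.eq, Matrix.conjTranspose_mul,
      Matrix.conjTranspose_neg, hustar, hKfh.eq, neg_neg] at t3
    rw [t1, t3, ← hcomm (f K)]
    rw [Matrix.neg_mul]
    abel
  have h2 : (2 : ℂ) • f Xᴴ = (2 : ℂ) • (f X)ᴴ := by
    rw [two_smul, two_smul, main]
  exact smul_right_injective (Mat n) two_ne_zero h2

/-- `f` of an invertible matrix: inverse commutes with `f`. -/
lemma f_unit_mul (hf : Admissible f) {X : Mat n} (h : IsUnit X.det) : f X * f X⁻¹ = 1 := by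
  rw [← f_mul hf, Matrix.mul_nonsing_inv _ h, f_one hf]

lemma f_isUnit (hf : Admissible f) {X : Mat n} (h : IsUnit X.det) : IsUnit (f X) :=
  (Matrix.isUnit_iff_isUnit_det _).mpr (Matrix.isUnit_det_of_right_inverse (f_unit_mul hf h))

lemma f_inv (hf : Admissible f) {X : Mat n} (h : IsUnit X.det) : (f X)⁻¹ = f X⁻¹ :=
  Matrix.inv_eq_right_inv (f_unit_mul hf h)

lemma f_posDef (hf : Admissible f) {X : Mat n} (h : X.PosDef) : (f X).PosDef :=
  posDef_of_posSemidef_isUnit (f_psd hf h.posSemidef)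
    (f_isUnit hf ((Matrix.isUnit_iff_isUnit_det _).mp h.isUnit))

end NMEAux

namespace NMEAux

def Cm {n : ℕ} (f : Mat n → Mat n) (A Q : Mat n) : Mat n := f A * (f Q)⁻¹ * A
def Bm {n : ℕ} (f : Mat n → Mat n) (A Q : Mat n) : Mat n := -(f A * (f Q)⁻¹ * (f A)ᴴ)
def Qm {n : ℕ} (f : Mat n → Mat n) (A Q : Mat n) : Mat n := Q + Aᴴ * (f Q)⁻¹ * A
def Sm {n : ℕ} (f : Mat n → Mat n) (A Q : Mat n) : Mat n := Qm f A Q - Bm f A Q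

/-- the backward-elimination sequence -/
def wseq {n : ℕ} (C S0 : Mat n) : ℕ → Mat n
  | 0 => S0
  | m + 1 => S0 - Cᴴ * (wseq C S0 m)⁻¹ * C

/-- `omg C S0 m D` : backward Schur complement of a chain with first diagonal `D`. -/
def omg {n : ℕ} (C S0 : Mat n) : ℕ → Mat n → Mat n
  | 0, D => D
  | m + 1, D => D - Cᴴ * (wseq C S0 m)⁻¹ * C

variable {n : ℕ} {f : Mat n → Mat n} {A Q : Mat n}

lemma nmeIter_succ (Ac Bc Qc : Mat n) (init : Mat n × Mat n × Mat n) (k : ℕ) :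
    nmeIter Ac Bc Qc init (k+1) =
      (Ac * (Qc - (nmeIter Ac Bc Qc init k).2.1)⁻¹ * (nmeIter Ac Bc Qc init k).1,
       Bc + Ac * (Qc - (nmeIter Ac Bc Qc init k).2.1)⁻¹ * Acᴴ,
       (nmeIter Ac Bc Qc init k).2.2 -
         (nmeIter Ac Bc Qc init k).1ᴴ * (Qc - (nmeIter Ac Bc Qc init k).2.1)⁻¹
           * (nmeIter Ac Bc Qc init k).1) := rfl

lemma nmeIter_shift (Ac Bc Qc : Mat n) (init : Mat n × Mat n × Mat n) (k : ℕ) :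
    nmeIter Ac Bc Qc init (k+1) = nmeIter Ac Bc Qc (nmeIter Ac Bc Qc init 1) k := by
  induction k with
  | zero => rfl
  | succ k ih => rw [nmeIter_succ, ih, ← nmeIter_succ]

lemma minusSeq_eq : minusSeq f A Q
    = nmeIter (Cm f A Q) (Bm f A Q) (Qm f A Q) (Cm f A Q, Bm f A Q, Qm f A Q) := rfl

lemma mBs_zero : mBs f A Q 0 = Bm f A Q := rfl
lemma mQs_zero : mQs f A Q 0 = Qm f A Q := rfl
lemma mBs_succ (k : ℕ) : mBs f A Q (k+1)
    = Bm f A Q + Cm f A Q * (Qm f A Q - mBs f A Q k)⁻¹ * (Cm f A Q)ᴴ := rfl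
lemma mQs_succ (k : ℕ) : mQs f A Q (k+1)
    = mQs f A Q k - (mAs f A Q k)ᴴ * (Qm f A Q - mBs f A Q k)⁻¹ * (mAs f A Q k) := rfl

section Main
variable (hf : Admissible f) (hQ : Q.PosDef)

include hf hQ

lemma fQ_pd : (f Q).PosDef := f_posDef hf hQ

lemma CmH : (Cm f A Q)ᴴ = Aᴴ * (f Q)⁻¹ * (f A)ᴴ := by
  have h := (fQ_pd hf hQ).inv.1.eq
  simp only [Cm, Matrix.conjTranspose_mul, Matrix.mul_assoc, h]

lemma negBm_psd : (-(Bm f A Q)).PosSemidef := by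
  rw [Bm, neg_neg]
  exact ((fQ_pd hf hQ).inv.posSemidef).mul_mul_conjTranspose_same (B := f A)

lemma Bm_herm : (Bm f A Q).IsHermitian := by
  have h := (negBm_psd (A := A) hf hQ).1
  simpa using h.neg

lemma Qm_sub_Q_psd : (Qm f A Q - Q).PosSemidef := by
  rw [show Qm f A Q - Q = Aᴴ * (f Q)⁻¹ * A by rw [Qm]; abel]
  exact ((fQ_pd hf hQ).inv.posSemidef).conjTranspose_mul_mul_same (B := A)

lemma Qm_pd : (Qm f A Q).PosDef := posDef_of_sub_psd hQ (Qm_sub_Q_psd hf hQ)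

/-- the key step : if `D ≥ Qm` then `Bm + C D⁻¹ Cᴴ ≤ 0`. -/
lemma negB_step {D : Mat n} (hDh : D.IsHermitian) (hDQ : (D - Qm f A Q).PosSemidef) :
    (-(Bm f A Q + Cm f A Q * D⁻¹ * (Cm f A Q)ᴴ)).PosSemidef := by
  have hDpd : D.PosDef := posDef_of_sub_psd (Qm_pd hf hQ) hDQ
  have hfQ : (f Q).PosDef := fQ_pd hf hQ
  set M : Mat n := f A * (f Q)⁻¹ with hM
  have hMH : Mᴴ = (f Q)⁻¹ * (f A)ᴴ := by
    rw [hM, Matrix.conjTranspose_mul, hfQ.inv.1.eq]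
  have h1 : M * (f Q) * Mᴴ = -(Bm f A Q) := by
    rw [hMH, hM, Bm, neg_neg, Matrix.mul_assoc, Matrix.mul_assoc, ← Matrix.mul_assoc (f Q),
      pd_mul_inv hfQ, Matrix.one_mul, Matrix.mul_assoc]
  have h2 : M * (A * D⁻¹ * Aᴴ) * Mᴴ = Cm f A Q * D⁻¹ * (Cm f A Q)ᴴ := by
    rw [hMH, hM, Cm]
    simp only [Matrix.conjTranspose_mul, hfQ.inv.1.eq, Matrix.mul_assoc]
  have key : -(Bm f A Q + Cm f A Q * D⁻¹ * (Cm f A Q)ᴴ)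
      = M * (f Q - A * D⁻¹ * Aᴴ) * Mᴴ := by
    rw [Matrix.mul_sub, Matrix.sub_mul, h1, h2]
    abel
  rw [key]
  have hsplit : f Q - A * D⁻¹ * Aᴴ
      = (f Q - A * (Qm f A Q)⁻¹ * Aᴴ) + A * ((Qm f A Q)⁻¹ - D⁻¹) * Aᴴ := by
    rw [Matrix.mul_sub, Matrix.sub_mul]
    abel
  have hinner : (f Q - A * D⁻¹ * Aᴴ).PosSemidef := by
    rw [hsplit]
    have p1 : (f Q - A * (Qm f A Q)⁻¹ * Aᴴ).PosSemidef := by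
      have := w_identity_psd (W := f Q) (Q := Q) (A := A) hfQ hQ
      rwa [show Q + Aᴴ * (f Q)⁻¹ * A = Qm f A Q from rfl] at this
    have p2 : (A * ((Qm f A Q)⁻¹ - D⁻¹) * Aᴴ).PosSemidef :=
      (inv_antitone (Qm_pd hf hQ) hDQ).mul_mul_conjTranspose_same (B := A)
    exact p1.add p2
  exact hinner.mul_mul_conjTranspose_same (B := M)

lemma B_facts : ∀ k, (mBs f A Q k).IsHermitian ∧ (-(mBs f A Q k)).PosSemidef := by
  intro k
  induction k with
  | zero => exact ⟨Bm_herm hf hQ, negBm_psd hf hQ⟩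
  | succ k ih =>
    have hDh : (Qm f A Q - mBs f A Q k).IsHermitian := (Qm_pd hf hQ).1.sub ih.1
    have hDQ : ((Qm f A Q - mBs f A Q k) - Qm f A Q).PosSemidef := by
      rw [show (Qm f A Q - mBs f A Q k) - Qm f A Q = -(mBs f A Q k) by abel]
      exact ih.2
    have hstep := negB_step hf hQ hDh hDQ
    rw [← mBs_succ] at hstep
    refine ⟨?_, hstep⟩
    simpa using hstep.1.neg

lemma S_pd (k : ℕ) : (Qm f A Q - mBs f A Q k).PosDef := by
  apply posDef_of_sub_psd (Qm_pd hf hQ)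
  rw [show (Qm f A Q - mBs f A Q k) - Qm f A Q = -(mBs f A Q k) by abel]
  exact (B_facts hf hQ k).2

lemma B_mono : ∀ k, (mBs f A Q (k+1) - mBs f A Q k).PosSemidef := by
  intro k
  induction k with
  | zero =>
    have e : mBs f A Q 1 - mBs f A Q 0
        = Cm f A Q * (Qm f A Q - Bm f A Q)⁻¹ * (Cm f A Q)ᴴ := by
      show Bm f A Q + Cm f A Q * (Qm f A Q - Bm f A Q)⁻¹ * (Cm f A Q)ᴴ - Bm f A Q = _
      abel
    rw [e]
    exact ((S_pd hf hQ 0).inv.posSemidef).mul_mul_conjTranspose_same (B := Cm f A Q)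
  | succ k ih =>
    have hmono : ((Qm f A Q - mBs f A Q k) - (Qm f A Q - mBs f A Q (k+1))).PosSemidef := by
      rw [show (Qm f A Q - mBs f A Q k) - (Qm f A Q - mBs f A Q (k+1))
        = mBs f A Q (k+1) - mBs f A Q k by abel]
      exact ih
    have hinv := inv_antitone (S_pd hf hQ (k+1)) hmono
    have e : mBs f A Q (k+2) - mBs f A Q (k+1)
        = Cm f A Q * ((Qm f A Q - mBs f A Q (k+1))⁻¹ - (Qm f A Q - mBs f A Q k)⁻¹)
          * (Cm f A Q)ᴴ := by
      rw [mBs_succ, mBs_succ, Matrix.mul_sub, Matrix.sub_mul]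
      abel
    rw [e]
    exact hinv.mul_mul_conjTranspose_same (B := Cm f A Q)

end Main
end NMEAux
namespace NMEAux
variable {n : ℕ} {f : Mat n → Mat n} {A Q : Mat n}

lemma inv_neg_pd {M : Mat n} (hM : M.PosDef) : (-M)⁻¹ = -(M⁻¹) := by
  apply Matrix.inv_eq_right_inv
  rw [Matrix.neg_mul, Matrix.mul_neg, neg_neg, pd_mul_inv hM]

section Sol
variable (hf : Admissible f) (hQ : Q.PosDef) {Y : Mat n} (hY : Y.PosDef)
  (hsol : Y - Aᴴ * (f Y)⁻¹ * A = Q)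

include hf hQ hY hsol

lemma sol_eq : Y = Q + Aᴴ * (f Y)⁻¹ * A := by rw [← hsol]; abel

lemma Z_pd : (f Y).PosDef := f_posDef hf hY

lemma Z_eq : f Y = f Q + (f A)ᴴ * Y⁻¹ * (f A) := by
  have hYu : IsUnit Y.det := (Matrix.isUnit_iff_isUnit_det _).mp hY.isUnit
  have h := congrArg f (sol_eq hf hQ hY hsol)
  rw [f_add hf, f_mul hf, f_mul hf, f_conjTranspose hf, f_inv hf hYu, f_invol hf] at h
  exact h

lemma Y_sub_Q_psd : (Y - Q).PosSemidef := by
  rw [show Y - Q = Aᴴ * (f Y)⁻¹ * A by rw [← hsol]; abel]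
  exact ((Z_pd hf hQ hY hsol).inv.posSemidef).conjTranspose_mul_mul_same (B := A)

lemma YB_pd : (Y - Bm f A Q).PosDef := by
  rw [Bm, sub_neg_eq_add]
  exact hY.add_posSemidef
    (((fQ_pd hf hQ).inv.posSemidef).mul_mul_conjTranspose_same (B := f A))

/-- the fixed point identity  `Qm - Cᴴ (Y - Bm)⁻¹ C = Y`. -/
lemma phiY : Qm f A Q - (Cm f A Q)ᴴ * (Y - Bm f A Q)⁻¹ * Cm f A Q = Y := by
  have hfQ : (f Q).PosDef := fQ_pd hf hQ
  have hYB : (Y - Bm f A Q).PosDef := YB_pd hf hQ hY hsol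
  have h2 : ((-Y)⁻¹ : Mat n) * (-Y) = 1 := by
    rw [inv_neg_pd hY, Matrix.neg_mul, Matrix.mul_neg, neg_neg, pd_inv_mul hY]
  have hXeq : -Y - f A * (f Q)⁻¹ * (f A)ᴴ = -(Y - Bm f A Q) := by
    rw [Bm]; abel
  have h3 : (-Y - f A * (f Q)⁻¹ * (f A)ᴴ) * (-Y - f A * (f Q)⁻¹ * (f A)ᴴ)⁻¹ = 1 := by
    rw [hXeq, inv_neg_pd hYB, Matrix.neg_mul, Matrix.mul_neg, neg_neg,
      pd_mul_inv hYB]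
  have hsmw := smw (D := f Q) (W := -Y) (C := f A) (pd_mul_inv hfQ) h2 h3
  rw [hXeq, inv_neg_pd hY, inv_neg_pd hYB] at hsmw
  have hZinv : (f Y)⁻¹
      = (f Q)⁻¹ - (f Q)⁻¹ * (f A)ᴴ * (Y - Bm f A Q)⁻¹ * (f A) * (f Q)⁻¹ := by
    have e : f Q - (f A)ᴴ * -Y⁻¹ * f A = f Y := by
      rw [Z_eq hf hQ hY hsol, Matrix.mul_neg, Matrix.neg_mul, sub_neg_eq_add]
    rw [e] at hsmw
    rw [hsmw]
    simp only [Matrix.mul_neg, Matrix.neg_mul, sub_eq_add_neg]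
  have hfin := sol_eq hf hQ hY hsol
  rw [hZinv] at hfin
  conv_rhs => rw [hfin]
  rw [CmH (A := A) hf hQ, Qm, Matrix.mul_sub, Matrix.sub_mul]
  simp only [Cm, Matrix.mul_assoc]
  abel
lemma w_herm_ge : ∀ m, (wseq (Cm f A Q) (Sm f A Q) m).IsHermitian ∧
    ((wseq (Cm f A Q) (Sm f A Q) m) - (Y - Bm f A Q)).PosSemidef := by
  have hYB : (Y - Bm f A Q).PosDef := YB_pd hf hQ hY hsol
  have hQmY : Qm f A Q - Y = (Cm f A Q)ᴴ * (Y - Bm f A Q)⁻¹ * Cm f A Q := by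
    conv_lhs => rw [← phiY hf hQ hY hsol]
    abel
  intro m
  induction m with
  | zero =>
    constructor
    · exact ((Qm_pd hf hQ).1.sub (Bm_herm hf hQ))
    · rw [show wseq (Cm f A Q) (Sm f A Q) 0 - (Y - Bm f A Q) = Qm f A Q - Y by
        show Sm f A Q - (Y - Bm f A Q) = _ ; rw [Sm]; abel]
      rw [hQmY]
      exact (hYB.inv.posSemidef).conjTranspose_mul_mul_same (B := Cm f A Q)
  | succ m ih =>
    have hWpd : (wseq (Cm f A Q) (Sm f A Q) m).PosDef := posDef_of_sub_psd hYB ih.2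
    constructor
    · show (Sm f A Q - (Cm f A Q)ᴴ * (wseq (Cm f A Q) (Sm f A Q) m)⁻¹ * Cm f A Q).IsHermitian
      exact ((Qm_pd hf hQ).1.sub (Bm_herm hf hQ)).sub
        (Matrix.isHermitian_conjTranspose_mul_mul _ hWpd.inv.1)
    · have e : wseq (Cm f A Q) (Sm f A Q) (m+1) - (Y - Bm f A Q)
          = (Cm f A Q)ᴴ * ((Y - Bm f A Q)⁻¹ - (wseq (Cm f A Q) (Sm f A Q) m)⁻¹)
            * Cm f A Q := by
        show Sm f A Q - (Cm f A Q)ᴴ * (wseq (Cm f A Q) (Sm f A Q) m)⁻¹ * Cm f A Q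
          - (Y - Bm f A Q) = _
        rw [Matrix.mul_sub, Matrix.sub_mul, ← hQmY, Sm]
        abel
      rw [e]
      exact (inv_antitone hYB ih.2).conjTranspose_mul_mul_same (B := Cm f A Q)

lemma w_pd (m : ℕ) : (wseq (Cm f A Q) (Sm f A Q) m).PosDef :=
  posDef_of_sub_psd (YB_pd hf hQ hY hsol) (w_herm_ge hf hQ hY hsol m).2

end Sol
end NMEAux
namespace NMEAux
variable {n : ℕ} {f : Mat n → Mat n} {A Q : Mat n}

section Sol2
variable (hf : Admissible f) (hQ : Q.PosDef) {Y : Mat n} (hY : Y.PosDef)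
  (hsol : Y - Aᴴ * (f Y)⁻¹ * A = Q)

include hf hQ hY hsol

/-- forward elimination equals single-shot backward elimination. -/
lemma chain : ∀ m (G B U : Mat n), B.IsHermitian → (-B).PosSemidef →
    (nmeIter (Cm f A Q) (Bm f A Q) (Qm f A Q) (G, B, U) (m+1)).2.2
      = U - Gᴴ * (omg (Cm f A Q) (Sm f A Q) m (Qm f A Q - B))⁻¹ * G := by
  intro m
  induction m with
  | zero =>
    intro G B U _ _
    rfl
  | succ m ih =>
    intro G B U hBh hBpsd
    have hDh : (Qm f A Q - B).IsHermitian := (Qm_pd hf hQ).1.sub hBh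
    have hDQ : ((Qm f A Q - B) - Qm f A Q).PosSemidef := by
      rw [show (Qm f A Q - B) - Qm f A Q = -B by abel]
      exact hBpsd
    have hDpd : (Qm f A Q - B).PosDef := posDef_of_sub_psd (Qm_pd hf hQ) hDQ
    set D := Qm f A Q - B with hD
    -- one step of the iteration
    rw [nmeIter_shift]
    have hstep : nmeIter (Cm f A Q) (Bm f A Q) (Qm f A Q) (G, B, U) 1
        = (Cm f A Q * D⁻¹ * G, Bm f A Q + Cm f A Q * D⁻¹ * (Cm f A Q)ᴴ,
           U - Gᴴ * D⁻¹ * G) := rfl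
    rw [hstep]
    have hB'h : (Bm f A Q + Cm f A Q * D⁻¹ * (Cm f A Q)ᴴ).IsHermitian := by
      have h := (negB_step hf hQ hDh hDQ).1
      simpa using h.neg
    have hB'psd := negB_step hf hQ hDh hDQ
    rw [ih _ _ _ hB'h hB'psd]
    -- rewrite  Qm - B' = Sm - C D⁻¹ Cᴴ
    have hQB' : Qm f A Q - (Bm f A Q + Cm f A Q * D⁻¹ * (Cm f A Q)ᴴ)
        = Sm f A Q - Cm f A Q * D⁻¹ * (Cm f A Q)ᴴ := by
      rw [Sm]; abel
    rw [hQB']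
    -- omg at the shifted diagonal
    have homg : omg (Cm f A Q) (Sm f A Q) m (Sm f A Q - Cm f A Q * D⁻¹ * (Cm f A Q)ᴴ)
        = wseq (Cm f A Q) (Sm f A Q) m - Cm f A Q * D⁻¹ * (Cm f A Q)ᴴ := by
      cases m with
      | zero => rfl
      | succ j =>
        show Sm f A Q - Cm f A Q * D⁻¹ * (Cm f A Q)ᴴ
            - (Cm f A Q)ᴴ * (wseq (Cm f A Q) (Sm f A Q) j)⁻¹ * Cm f A Q = _
        show _ = Sm f A Q - (Cm f A Q)ᴴ * (wseq (Cm f A Q) (Sm f A Q) j)⁻¹ * Cm f A Q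
            - Cm f A Q * D⁻¹ * (Cm f A Q)ᴴ
        abel
    rw [homg]
    -- SMW
    have hW := w_pd hf hQ hY hsol m
    have hXpd : (wseq (Cm f A Q) (Sm f A Q) m - Cm f A Q * D⁻¹ * (Cm f A Q)ᴴ).PosDef := by
      have e : wseq (Cm f A Q) (Sm f A Q) m - Cm f A Q * D⁻¹ * (Cm f A Q)ᴴ
          = Y + ((wseq (Cm f A Q) (Sm f A Q) m - (Y - Bm f A Q))
            + (-(Bm f A Q + Cm f A Q * D⁻¹ * (Cm f A Q)ᴴ))) := by abel
      rw [e]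
      exact hY.add_posSemidef ((w_herm_ge hf hQ hY hsol m).2.add hB'psd)
    have hsmw := smw (D := D) (W := wseq (Cm f A Q) (Sm f A Q) m) (C := Cm f A Q)
      (pd_mul_inv hDpd) (pd_inv_mul hW) (pd_mul_inv hXpd)
    have homg2 : omg (Cm f A Q) (Sm f A Q) (m+1) D
        = D - (Cm f A Q)ᴴ * (wseq (Cm f A Q) (Sm f A Q) m)⁻¹ * Cm f A Q := rfl
    rw [homg2, hsmw]
    -- final algebra
    have hGH : (Cm f A Q * D⁻¹ * G)ᴴ = Gᴴ * D⁻¹ * (Cm f A Q)ᴴ := by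
      simp only [Matrix.conjTranspose_mul, hDpd.inv.1.eq, Matrix.mul_assoc]
    rw [hGH]
    simp only [Matrix.mul_add, Matrix.add_mul, Matrix.mul_assoc]
    abel

lemma omg_S0 : ∀ k, omg (Cm f A Q) (Sm f A Q) k (Sm f A Q) = wseq (Cm f A Q) (Sm f A Q) k := by
  intro k
  cases k with
  | zero => rfl
  | succ j => rfl

lemma Q_formula (k : ℕ) : mQs f A Q (k+1)
    = Qm f A Q - (Cm f A Q)ᴴ * (wseq (Cm f A Q) (Sm f A Q) k)⁻¹ * Cm f A Q := by
  have h := chain hf hQ hY hsol k (Cm f A Q) (Bm f A Q) (Qm f A Q)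
    (Bm_herm hf hQ) (negBm_psd hf hQ)
  have e : mQs f A Q (k+1)
      = (nmeIter (Cm f A Q) (Bm f A Q) (Qm f A Q)
          (Cm f A Q, Bm f A Q, Qm f A Q) (k+1)).2.2 := rfl
  rw [e, h, show Qm f A Q - Bm f A Q = Sm f A Q from rfl, omg_S0 hf hQ hY hsol]

lemma Q_ge_Y (k : ℕ) : (mQs f A Q (k+1) - Y).PosSemidef := by
  have hYB : (Y - Bm f A Q).PosDef := YB_pd hf hQ hY hsol
  have hQmY : Qm f A Q - Y = (Cm f A Q)ᴴ * (Y - Bm f A Q)⁻¹ * Cm f A Q := by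
    conv_lhs => rw [← phiY hf hQ hY hsol]
    abel
  have e : mQs f A Q (k+1) - Y
      = (Cm f A Q)ᴴ * ((Y - Bm f A Q)⁻¹ - (wseq (Cm f A Q) (Sm f A Q) k)⁻¹) * Cm f A Q := by
    rw [Q_formula hf hQ hY hsol k, Matrix.mul_sub, Matrix.sub_mul, ← hQmY]
    abel
  rw [e]
  exact (inv_antitone hYB (w_herm_ge hf hQ hY hsol k).2).conjTranspose_mul_mul_same
    (B := Cm f A Q)

end Sol2

section Mono
variable (hf : Admissible f) (hQ : Q.PosDef)
include hf hQ

lemma Q_mono (k : ℕ) : (mQs f A Q k - mQs f A Q (k+1)).PosSemidef := by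
  have e : mQs f A Q k - mQs f A Q (k+1)
      = (mAs f A Q k)ᴴ * (Qm f A Q - mBs f A Q k)⁻¹ * (mAs f A Q k) := by
    rw [mQs_succ]; abel
  rw [e]
  exact ((S_pd hf hQ k).inv.posSemidef).conjTranspose_mul_mul_same (B := mAs f A Q k)

end Mono
end NMEAux
/-- for the minus-sign equation the sequences are well defined
(`Q^{(1)} - B^{(k)}` is positive definite for all `k`), and for every Hermitian positive
definite solution `X_K` of `X - Aᴴ f(X)⁻¹ A = Q` the chain
`B^{(k)} ≤ B^{(k+1)} ≤ 0 < Q ≤ X_K ≤ Q^{(k+1)} ≤ Q^{(k)}` holds. -/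
theorem stmt_10 {n : ℕ} (f : Mat n → Mat n) (hf : Admissible f)
    (A Q : Mat n) (hQ : Q.PosDef) :
    (∀ k, (mQs f A Q 0 - mBs f A Q k).PosDef) ∧
    (∀ XK : Mat n, XK.PosDef → XK - Aᴴ * (f XK)⁻¹ * A = Q →
      ∀ k, (mBs f A Q (k + 1) - mBs f A Q k).PosSemidef ∧
        (-(mBs f A Q (k + 1))).PosSemidef ∧
        Q.PosDef ∧
        (XK - Q).PosSemidef ∧
        (mQs f A Q (k + 1) - XK).PosSemidef ∧
        (mQs f A Q k - mQs f A Q (k + 1)).PosSemidef) := by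
  constructor
  · intro k
    exact NMEAux.S_pd hf hQ k
  · intro XK hXK hsolXK k
    exact ⟨NMEAux.B_mono hf hQ k, (NMEAux.B_facts hf hQ (k+1)).2, hQ,
      NMEAux.Y_sub_Q_psd hf hQ hXK hsolXK,
      NMEAux.Q_ge_Y hf hQ hXK hsolXK k,
      NMEAux.Q_mono hf hQ k⟩
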